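/- Let k be a field and let D be a k-linear, Hom-finite, Ext-bounded triangulated category. Let d ≥ 1 be an integer, T a triangulated endofunctor of D, and G, G′, A objects of D such that for every n ≥ 1 there is a distinguished triangle A[(1−d)(n−1)] → T^{n−1}(G) → Tⁿ(G) → A[(1−d)(n−1)+1] (as holds for the spherical twist T = T_E along a d-spherical object E, with A = RHom(E,G)⊗E). Set A_t = ε_t(G′, A) and B_t = ε_t(G′, G). Then for every n ≥ 1 and every t ∈ ℝ: ε_t(G′, Tⁿ(G)) ≤ n·e^t·A_t + B_t if d = 1; ε_0(G′, Tⁿ(G)) ≤ n·A_0 + B_0; ε_t(G′, Tⁿ(G)) ≤ (e^{(1−d)nt}/(e^{(1−d)t} − 1))·A_t + B_t if t < 0 and d ≥ 2; and ε_t(G′, Tⁿ(G)) ≤ (e^t/(1 − e^{(1−d)t}))·A_t + B_t if t > 0 and d ≥ 2. -/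

import Mathlib

open CategoryTheory Category Limits Pretriangulated Filter Topology
open scoped ENNReal

universe v u

namespace CatDyn

variable {D : Type u} [Category.{v} D] [Limits.HasZeroObject D] [Preadditive D]
  [HasShift D ℤ] [∀ n : ℤ, (CategoryTheory.shiftFunctor D n).Additive] [Pretriangulated D]
  [HasBinaryBiproducts D]

/-- A tower `0 = A₀ → A₁ → ⋯ → A_m ≅ N ⊕ N'` with cones shifts of `M`,
computing the complexity of `N` with respect to `M`. -/
structure Tower (M N : D) where
  m : ℕ
  A : Fin (m + 1) → D
  f : ∀ i : Fin m, A i.castSucc ⟶ A i.succ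
  shifts : Fin m → ℤ
  N' : D
  isZero_zero : IsZero (A 0)
  lastIso : A (Fin.last m) ≅ N ⊞ N'
  dist : ∀ i : Fin m, ∃ (g : A i.succ ⟶ M⟦shifts i⟧) (h : M⟦shifts i⟧ ⟶ (A i.castSucc)⟦(1 : ℤ)⟧),
    Triangle.mk (f i) g h ∈ distTriang D

/-- The value `Σ_k e^{n_k t}` of a tower. -/
noncomputable def Tower.value {M N : D} (t : ℝ) (T : Tower M N) : ℝ≥0∞ :=
  ∑ i : Fin T.m, ENNReal.ofReal (Real.exp (T.shifts i * t))

/-- The complexity function `δ_t(M,N)`, valued in `[0,∞]`; it is `∞` iff no tower exists,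
i.e. iff `N` is not in the thick triangulated subcategory generated by `M`. -/
noncomputable def complexity (t : ℝ) (M N : D) : ℝ≥0∞ :=
  ⨅ T : Tower M N, T.value t

/-- `G` is a split generator: every object admits a tower over `G`, i.e. the thick
triangulated subcategory generated by `G` is all of `D`. -/
def IsSplitGenerator (G : D) : Prop := ∀ N : D, Nonempty (Tower G N)

/-- The `n`-th iterate of an endofunctor. -/
def fpow (F : D ⥤ D) : ℕ → D ⥤ D
  | 0 => 𝟭 D
  | n + 1 => fpow F n ⋙ F

/-- `F` is not virtually zero: no positive iterate is the zero functor. -/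
def NotVirtuallyZero (F : D ⥤ D) : Prop := ∀ n : ℕ, 0 < n → ¬ IsZero (fpow F n)

/-- The categorical entropy `h_t(F) ∈ [-∞,∞)`, computed with split generator `G`
(the limit exists and is independent of the generator). -/
noncomputable def entropy (t : ℝ) (F : D ⥤ D) (G : D) : EReal :=
  limsup (fun n : ℕ =>
    ENNReal.log (complexity t G ((fpow F n).obj G)) * (((n : ℝ)⁻¹ : ℝ) : EReal)) atTop

/-- The categorical polynomial entropy
`h^pol_t(F) = limsup (log δ_t(G, Fⁿ G) - n h_t(F)) / log n`. -/
noncomputable def polyEntropy (t : ℝ) (F : D ⥤ D) (G : D) : EReal :=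
  limsup (fun n : ℕ =>
    (ENNReal.log (complexity t G ((fpow F n).obj G)) - ((n : ℝ) : EReal) * entropy t F G)
      * ((((Real.log n)⁻¹ : ℝ)) : EReal)) atTop

/-- The lower categorical polynomial entropy (with `liminf` instead of `limsup`). -/
noncomputable def polyEntropyLow (t : ℝ) (F : D ⥤ D) (G : D) : EReal :=
  liminf (fun n : ℕ =>
    (ENNReal.log (complexity t G ((fpow F n).obj G)) - ((n : ℝ) : EReal) * entropy t F G)
      * ((((Real.log n)⁻¹ : ℝ)) : EReal)) atTop

section Linear

variable (𝕜 : Type*) [Field 𝕜] [Linear 𝕜 D]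

/-- The Ext-distance `ε_t(M,N) = Σ_{k∈ℤ} dim Hom(M, N[k]) e^{-kt}`. -/
noncomputable def extDist (t : ℝ) (M N : D) : ℝ≥0∞ :=
  ∑' k : ℤ, (Module.finrank 𝕜 (M ⟶ N⟦k⟧) : ℝ≥0∞) * ENNReal.ofReal (Real.exp (-k * t))

variable (D) in
/-- `D` is Hom-finite over `𝕜`. -/
def HomFinite : Prop := ∀ X Y : D, FiniteDimensional 𝕜 (X ⟶ Y)

variable (D) in
/-- `D` is Ext-bounded: `Hom(X, Y[k]) = 0` for all but finitely many `k`. -/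
def ExtBounded : Prop := ∀ X Y : D, {k : ℤ | ∃ f : X ⟶ Y⟦k⟧, f ≠ 0}.Finite

variable (D) in
/-- The comparability property: `δ_t` and `ε_t` control each other, uniformly in the objects. -/
def Comparability : Prop :=
  ∃ C₁ C₂ : ℝ → ℝ, (∀ t, 0 < C₁ t ∧ 0 < C₂ t) ∧
    ∀ (t : ℝ) (M N : D),
      ENNReal.ofReal (C₁ t) * extDist 𝕜 t M N ≤ complexity t M N ∧
      complexity t M N ≤ ENNReal.ofReal (C₂ t) * extDist 𝕜 t M N

end Linear


section Helpers

variable {D : Type u} [Category.{v} D] [Limits.HasZeroObject D] [Preadditive D]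
  [HasShift D ℤ] [∀ n : ℤ, (CategoryTheory.shiftFunctor D n).Additive] [Pretriangulated D]
  (𝕜 : Type*) [Field 𝕜] [Linear 𝕜 D]

lemma finrank_le_aux {U V W : Type*} [AddCommGroup U] [Module 𝕜 U] [AddCommGroup V] [Module 𝕜 V]
    [AddCommGroup W] [Module 𝕜 W] [FiniteDimensional 𝕜 U] [FiniteDimensional 𝕜 V]
    [FiniteDimensional 𝕜 W]
    (φ₁ : U →ₗ[𝕜] V) (φ₂ : V →ₗ[𝕜] W) (h : LinearMap.ker φ₂ ≤ LinearMap.range φ₁) :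
    Module.finrank 𝕜 V ≤ Module.finrank 𝕜 U + Module.finrank 𝕜 W := by
  have h1 := LinearMap.finrank_range_add_finrank_ker φ₂
  have h2 : Module.finrank 𝕜 (LinearMap.ker φ₂) ≤ Module.finrank 𝕜 U :=
    (Submodule.finrank_mono h).trans φ₁.finrank_range_le
  have h3 : Module.finrank 𝕜 (LinearMap.range φ₂) ≤ Module.finrank 𝕜 W :=
    (LinearMap.range φ₂).finrank_le
  omega

/-- Hom out of a fixed object, as linear equiv along an iso. -/
noncomputable def homEquivOfIso {M X Y : D} (e : X ≅ Y) : (M ⟶ X) ≃ₗ[𝕜] (M ⟶ Y) :=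
  LinearEquiv.ofLinear (Linear.rightComp 𝕜 M e.hom) (Linear.rightComp 𝕜 M e.inv)
    (by ext f; simp [Linear.rightComp]) (by ext f; simp [Linear.rightComp])

lemma finrank_hom_le (hfin : HomFinite D 𝕜) (M : D) (Tr : Triangle D)
    (hTr : Tr ∈ distTriang D) :
    Module.finrank 𝕜 (M ⟶ Tr.obj₂) ≤
      Module.finrank 𝕜 (M ⟶ Tr.obj₁) + Module.finrank 𝕜 (M ⟶ Tr.obj₃) := by
  have := hfin M Tr.obj₁; have := hfin M Tr.obj₂; have := hfin M Tr.obj₃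
  refine finrank_le_aux 𝕜 (Linear.rightComp 𝕜 M Tr.mor₁) (Linear.rightComp 𝕜 M Tr.mor₂) ?_
  intro f hf
  obtain ⟨g, hg⟩ := Triangle.coyoneda_exact₂ Tr hTr f (by simpa using hf)
  exact ⟨g, hg.symm⟩

/-- Subadditivity of the Ext-distance on distinguished triangles. -/
lemma extDist_le_of_distTriang (hfin : HomFinite D 𝕜) (t : ℝ) (M : D) (Tr : Triangle D)
    (hTr : Tr ∈ distTriang D) :
    extDist 𝕜 t M Tr.obj₂ ≤ extDist 𝕜 t M Tr.obj₁ + extDist 𝕜 t M Tr.obj₃ := by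
  rw [extDist, extDist, extDist, ← ENNReal.tsum_add]
  refine ENNReal.tsum_le_tsum fun k => ?_
  rw [← add_mul]
  refine mul_le_mul_left ?_ _
  have := finrank_hom_le 𝕜 hfin M ((Triangle.shiftFunctor D k).obj Tr)
    (Triangle.shift_distinguished Tr hTr k)
  exact_mod_cast this

/-- Ext-distance of a shift. -/
lemma extDist_shift (t : ℝ) (M N : D) (s : ℤ) :
    extDist 𝕜 t M (N⟦s⟧) = ENNReal.ofReal (Real.exp (s * t)) * extDist 𝕜 t M N := by
  rw [extDist, extDist, ← ENNReal.tsum_mul_left]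
  set F : ℤ → ℝ≥0∞ := fun k => (Module.finrank 𝕜 (M ⟶ N⟦s⟧⟦k⟧) : ℝ≥0∞)
    * ENNReal.ofReal (Real.exp (-k * t)) with hF
  have key : ∀ j : ℤ, F (j - s) =
      ENNReal.ofReal (Real.exp (s * t)) *
        ((Module.finrank 𝕜 (M ⟶ N⟦j⟧) : ℝ≥0∞) * ENNReal.ofReal (Real.exp (-j * t))) := by
    intro j
    have e1 : N⟦s⟧⟦j - s⟧ ≅ N⟦j⟧ :=
      ((shiftFunctorAdd' D s (j - s) j (by ring)).app N).symm
    have hr : Module.finrank 𝕜 (M ⟶ N⟦s⟧⟦j - s⟧) = Module.finrank 𝕜 (M ⟶ N⟦j⟧) :=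
      (homEquivOfIso 𝕜 e1).finrank_eq
    rw [hF]
    simp only [hr]
    have : (-((j - s : ℤ) : ℝ)) * t = s * t + (-j * t) := by push_cast; ring
    rw [this, Real.exp_add, ENNReal.ofReal_mul (Real.exp_nonneg _)]
    ring
  calc ∑' k : ℤ, F k
      = ∑' j : ℤ, F (j - s) := by
        rw [← (Equiv.subRight s).tsum_eq F]
        simp only [Equiv.subRight_apply]
    _ = _ := tsum_congr key

end Helpers

set_option maxHeartbeats 1000000 in
/-- Upper bound for iterates of (an abstraction of) a spherical twist:
if for every `n` there is a distinguished triangle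
`A[(1-d)n] → Tⁿ(G) → T^{n+1}(G) → A[(1-d)n][1]`, then, with `A_t = ε_t(G', A)` and
`B_t = ε_t(G', G)`, one has for all `n ≥ 1` the stated bounds on `ε_t(G', Tⁿ(G))`
according to the sign of `t` and the value of `d`. -/
theorem statement_11 {D : Type u} [Category.{v} D] [HasZeroObject D] [Preadditive D]
    [HasShift D ℤ] [∀ n : ℤ, (CategoryTheory.shiftFunctor D n).Additive] [Pretriangulated D]
    [HasBinaryBiproducts D] (𝕜 : Type*) [Field 𝕜] [Linear 𝕜 D]
    (hfin : HomFinite D 𝕜) (hbdd : ExtBounded D)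
    (d : ℕ) (hd : 1 ≤ d) (T : D ⥤ D) [T.CommShift ℤ] [T.IsTriangulated]
    (G G' A : D)
    (htri : ∀ n : ℕ, ∃ (f : (A⟦(1 - (d : ℤ)) * n⟧) ⟶ (fpow T n).obj G)
      (g : (fpow T n).obj G ⟶ (fpow T (n + 1)).obj G)
      (h : (fpow T (n + 1)).obj G ⟶ (A⟦(1 - (d : ℤ)) * n⟧)⟦(1 : ℤ)⟧),
      Triangle.mk f g h ∈ distTriang D) :
    ∀ n : ℕ, 1 ≤ n →
      (d = 1 → ∀ t : ℝ,
        extDist 𝕜 t G' ((fpow T n).obj G) ≤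
          (n : ℝ≥0∞) * ENNReal.ofReal (Real.exp t) * extDist 𝕜 t G' A + extDist 𝕜 t G' G) ∧
      (extDist 𝕜 0 G' ((fpow T n).obj G) ≤
        (n : ℝ≥0∞) * extDist 𝕜 0 G' A + extDist 𝕜 0 G' G) ∧
      (2 ≤ d → ∀ t : ℝ, t < 0 →
        extDist 𝕜 t G' ((fpow T n).obj G) ≤
          ENNReal.ofReal (Real.exp ((1 - (d : ℝ)) * n * t) / (Real.exp ((1 - (d : ℝ)) * t) - 1))
            * extDist 𝕜 t G' A + extDist 𝕜 t G' G) ∧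
      (2 ≤ d → ∀ t : ℝ, 0 < t →
        extDist 𝕜 t G' ((fpow T n).obj G) ≤
          ENNReal.ofReal (Real.exp t / (1 - Real.exp ((1 - (d : ℝ)) * t)))
            * extDist 𝕜 t G' A + extDist 𝕜 t G' G) := by
  classical
  -- the extDist of the doubly shifted A
  have shift2 : ∀ (t : ℝ) (n : ℕ),
      extDist 𝕜 t G' ((A⟦(1 - (d : ℤ)) * n⟧)⟦(1 : ℤ)⟧) =
        ENNReal.ofReal (Real.exp (((1 - (d : ℝ)) * n + 1) * t)) * extDist 𝕜 t G' A := by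
    intro t n
    rw [extDist_shift, extDist_shift, ← mul_assoc,
      ← ENNReal.ofReal_mul (Real.exp_nonneg _), ← Real.exp_add]
    congr 2
    push_cast
    ring
  have key : ∀ (t : ℝ) (n : ℕ), extDist 𝕜 t G' ((fpow T n).obj G) ≤
      (∑ j ∈ Finset.range n, ENNReal.ofReal (Real.exp (((1 - (d : ℝ)) * j + 1) * t)))
        * extDist 𝕜 t G' A + extDist 𝕜 t G' G := by
    intro t n
    induction n with
    | zero => simpa [fpow] using le_refl (extDist 𝕜 t G' G)
    | succ n ih =>
      obtain ⟨f, g, h, hT⟩ := htri n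
      have h1 := extDist_le_of_distTriang 𝕜 hfin t G' _ (rot_of_distTriang _ hT)
      dsimp only [Triangle.rotate, Triangle.mk] at h1
      rw [shift2 t n] at h1
      calc extDist 𝕜 t G' ((fpow T (n + 1)).obj G)
          ≤ extDist 𝕜 t G' ((fpow T n).obj G) +
            ENNReal.ofReal (Real.exp (((1 - (d : ℝ)) * n + 1) * t)) * extDist 𝕜 t G' A := h1
        _ ≤ ((∑ j ∈ Finset.range n, ENNReal.ofReal (Real.exp (((1 - (d : ℝ)) * j + 1) * t)))
              * extDist 𝕜 t G' A + extDist 𝕜 t G' G) +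
            ENNReal.ofReal (Real.exp (((1 - (d : ℝ)) * n + 1) * t)) * extDist 𝕜 t G' A :=
              add_le_add_left ih _
        _ = _ := by rw [Finset.sum_range_succ, add_mul]; ring
  intro n hn
  refine ⟨?_, ?_, ?_, ?_⟩
  · -- d = 1
    intro hd1 t
    subst hd1
    refine (key t n).trans ?_
    refine add_le_add_left (mul_le_mul_left (le_of_eq ?_) _) _
    have : ∀ j ∈ Finset.range n,
        ENNReal.ofReal (Real.exp (((1 - ((1 : ℕ) : ℝ)) * j + 1) * t)) =
          ENNReal.ofReal (Real.exp t) := by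
      intro j _
      norm_num
    rw [Finset.sum_congr rfl this, Finset.sum_const, Finset.card_range, nsmul_eq_mul]
  · -- t = 0
    refine (key 0 n).trans ?_
    refine add_le_add_left (mul_le_mul_left (le_of_eq ?_) _) _
    have : ∀ j ∈ Finset.range n,
        ENNReal.ofReal (Real.exp (((1 - (d : ℝ)) * j + 1) * 0)) = 1 := by
      intro j _
      norm_num
    rw [Finset.sum_congr rfl this, Finset.sum_const, Finset.card_range, nsmul_eq_mul, mul_one]
  · -- t < 0, d ≥ 2
    intro hd2 t ht
    refine (key t n).trans ?_
    refine add_le_add_left (mul_le_mul_left ?_ _) _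
    rw [← ENNReal.ofReal_sum_of_nonneg (fun j _ => Real.exp_nonneg _)]
    refine ENNReal.ofReal_le_ofReal ?_
    set r : ℝ := Real.exp ((1 - (d : ℝ)) * t) with hrdef
    have hd2' : (2 : ℝ) ≤ (d : ℝ) := by exact_mod_cast hd2
    have hpos : 0 < (1 - (d : ℝ)) * t := mul_pos_of_neg_of_neg (by linarith) ht
    have hr1 : 1 < r := Real.one_lt_exp_iff.mpr hpos
    have hterm : ∀ j ∈ Finset.range n, Real.exp (((1 - (d : ℝ)) * j + 1) * t)
        = Real.exp t * r ^ j := by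
      intro j _
      rw [hrdef, ← Real.exp_nat_mul, ← Real.exp_add]
      congr 1
      ring
    rw [Finset.sum_congr rfl hterm, ← Finset.mul_sum, geom_sum_eq hr1.ne' n]
    have hrn : Real.exp ((1 - (d : ℝ)) * n * t) = r ^ n := by
      rw [hrdef, ← Real.exp_nat_mul]
      congr 1
      ring
    rw [hrn, mul_div_assoc']
    have hden : 0 < r - 1 := by linarith
    refine div_le_div_of_nonneg_right ?_ hden.le |>.trans_eq rfl
    have he1 : Real.exp t ≤ 1 := Real.exp_le_one_iff.mpr ht.le
    have hrn1 : 1 ≤ r ^ n := one_le_pow₀ hr1.le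
    nlinarith [Real.exp_pos t]
  · -- t > 0, d ≥ 2
    intro hd2 t ht
    refine (key t n).trans ?_
    refine add_le_add_left (mul_le_mul_left ?_ _) _
    rw [← ENNReal.ofReal_sum_of_nonneg (fun j _ => Real.exp_nonneg _)]
    refine ENNReal.ofReal_le_ofReal ?_
    set r : ℝ := Real.exp ((1 - (d : ℝ)) * t) with hrdef
    have hd2' : (2 : ℝ) ≤ (d : ℝ) := by exact_mod_cast hd2
    have hneg : (1 - (d : ℝ)) * t < 0 := mul_neg_of_neg_of_pos (by linarith) ht
    have hr1 : r < 1 := Real.exp_lt_one_iff.mpr hneg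
    have hr0 : 0 < r := Real.exp_pos _
    have hterm : ∀ j ∈ Finset.range n, Real.exp (((1 - (d : ℝ)) * j + 1) * t)
        = Real.exp t * r ^ j := by
      intro j _
      rw [hrdef, ← Real.exp_nat_mul, ← Real.exp_add]
      congr 1
      ring
    rw [Finset.sum_congr rfl hterm, ← Finset.mul_sum, geom_sum_eq hr1.ne n]
    rw [show r ^ n - 1 = -(1 - r ^ n) by ring, show r - 1 = -(1 - r) by ring, neg_div_neg_eq]
    have hden : 0 < 1 - r := by linarith
    have hnum : (1 - r ^ n) / (1 - r) ≤ 1 / (1 - r) := by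
      apply div_le_div_of_nonneg_right ?_ hden.le |>.trans_eq rfl
      have : 0 ≤ r ^ n := pow_nonneg hr0.le n
      linarith
    calc Real.exp t * ((1 - r ^ n) / (1 - r))
        ≤ Real.exp t * (1 / (1 - r)) :=
          mul_le_mul_of_nonneg_left hnum (Real.exp_nonneg t)
      _ = Real.exp t / (1 - r) := by rw [mul_one_div]


end CatDyn
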